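/- Let G be a finite simple graph of order n with no full vertices (no vertex adjacent to all other vertices). Then GC(G) = n if and only if PRC(G) = n. -/
import Mathlib


open SimpleGraph Finset

variable {V : Type*} [Fintype V] [DecidableEq V]

/-- `S` is a dominating set of the graph `G`. -/
def IsDomSet (G : SimpleGraph V) (S : Finset V) : Prop :=
  ∀ v : V, v ∈ S ∨ ∃ u ∈ S, G.Adj u v

/-- `S` is a global dominating set of `G`: it dominates both `G` and its complement. -/
def IsGlobalDomSet (G : SimpleGraph V) (S : Finset V) : Prop :=
  IsDomSet G S ∧ IsDomSet Gᶜ S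

/-- Disjoint sets `A` and `B` form a global coalition in `G`. -/
def IsGlobalCoalition (G : SimpleGraph V) (A B : Finset V) : Prop :=
  Disjoint A B ∧ ¬ IsGlobalDomSet G A ∧ ¬ IsGlobalDomSet G B ∧ IsGlobalDomSet G (A ∪ B)

/-- `π` is a global coalition partition (gc-partition) of `G`. -/
def IsGCPartition (G : SimpleGraph V) (π : Finpartition (Finset.univ : Finset V)) : Prop :=
  ∀ A ∈ π.parts, ¬ IsGlobalDomSet G A ∧ ∃ B ∈ π.parts, B ≠ A ∧ IsGlobalCoalition G A B

/-- The global coalition number `GC(G)`: the maximum number of parts in a gc-partition of `G`. -/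
noncomputable def globalCoalitionNumber (G : SimpleGraph V) : ℕ :=
  sSup {n | ∃ π : Finpartition (Finset.univ : Finset V), IsGCPartition G π ∧ π.parts.card = n}

/-- `S` is a perfect dominating set of `G`: every vertex not in `S` has exactly one neighbor
in `S`. -/
def IsPerfectDomSet (G : SimpleGraph V) (S : Finset V) : Prop :=
  ∀ v ∉ S, ∃! u, u ∈ S ∧ G.Adj u v

/-- Disjoint sets `A` and `B` form a perfect coalition in `G`. -/
def IsPerfectCoalition (G : SimpleGraph V) (A B : Finset V) : Prop :=
  Disjoint A B ∧ ¬ IsDomSet G A ∧ ¬ IsDomSet G B ∧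
  (∀ v ∉ A, ∀ u₁ ∈ A, ∀ u₂ ∈ A, G.Adj u₁ v → G.Adj u₂ v → u₁ = u₂) ∧
  (∀ v ∉ B, ∀ u₁ ∈ B, ∀ u₂ ∈ B, G.Adj u₁ v → G.Adj u₂ v → u₁ = u₂) ∧
  IsPerfectDomSet G (A ∪ B)

/-- `π` is a perfect coalition partition (prc-partition) of `G`. -/
def IsPrcPartition (G : SimpleGraph V) (π : Finpartition (Finset.univ : Finset V)) : Prop :=
  ∀ A ∈ π.parts, (∃ v : V, A = {v} ∧ IsDomSet G A) ∨
    ∃ B ∈ π.parts, B ≠ A ∧ IsPerfectCoalition G A B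

/-- The perfect coalition number `PRC(G)`. -/
noncomputable def perfectCoalitionNumber (G : SimpleGraph V) : ℕ :=
  sSup {n | ∃ π : Finpartition (Finset.univ : Finset V), IsPrcPartition G π ∧ π.parts.card = n}


set_option linter.unusedSectionVars false

lemma singleton_not_dom (G : SimpleGraph V)
    (hfull : ∀ v : V, ∃ u : V, u ≠ v ∧ ¬ G.Adj v u) (v : V) :
    ¬ IsDomSet G ({v} : Finset V) := by
  intro h
  obtain ⟨u, hu, hadj⟩ := hfull v
  rcases h u with h1 | ⟨w, hw, hadjw⟩
  · exact hu (Finset.mem_singleton.mp h1)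
  · rw [Finset.mem_singleton] at hw; subst hw; exact hadj hadjw

lemma pair_dom_iff (G : SimpleGraph V) {v u : V} (hvu : v ≠ u) :
    IsGlobalDomSet G ({v} ∪ {u}) ↔ IsPerfectDomSet G ({v} ∪ {u}) := by
  have hmem : ∀ x : V, x ∈ ({v} ∪ {u} : Finset V) ↔ x = v ∨ x = u := by
    intro x; simp [Finset.mem_union]
  constructor
  · rintro ⟨hd, hdc⟩ w hw
    rw [hmem] at hw; push_neg at hw
    rcases hd w with hx | ⟨x, hxS, hadj⟩
    · exact absurd ((hmem w).mp hx) (by tauto)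
    rcases hdc w with hy | ⟨y, hyS, hadjc⟩
    · exact absurd ((hmem w).mp hy) (by tauto)
    rw [SimpleGraph.compl_adj] at hadjc
    have hxy : x ≠ y := fun h => hadjc.2 (h ▸ hadj)
    refine ⟨x, ⟨hxS, hadj⟩, ?_⟩
    rintro z ⟨hzS, hadjz⟩
    have hzy : z ≠ y := fun h => hadjc.2 (h ▸ hadjz)
    rw [hmem] at hxS hyS hzS
    rcases hxS with rfl|rfl <;> rcases hyS with rfl|rfl <;> rcases hzS with rfl|rfl <;> tauto
  · intro hp
    constructor
    · intro w
      by_cases hw : w ∈ ({v} ∪ {u} : Finset V)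
      · exact Or.inl hw
      · obtain ⟨x, ⟨hxS, hadj⟩, _⟩ := hp w hw
        exact Or.inr ⟨x, hxS, hadj⟩
    · intro w
      by_cases hw : w ∈ ({v} ∪ {u} : Finset V)
      · exact Or.inl hw
      · obtain ⟨x, ⟨hxS, hadj⟩, huniq⟩ := hp w hw
        have hw' := hw
        rw [hmem] at hw'; push_neg at hw'
        rw [hmem] at hxS
        refine Or.inr ?_
        rcases hxS with rfl | rfl
        · refine ⟨u, (hmem u).mpr (Or.inr rfl), ?_⟩
          rw [SimpleGraph.compl_adj]
          refine ⟨fun h => hw'.2 h.symm, fun hadj' => ?_⟩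
          exact hvu (huniq u ⟨(hmem u).mpr (Or.inr rfl), hadj'⟩).symm
        · refine ⟨v, (hmem v).mpr (Or.inl rfl), ?_⟩
          rw [SimpleGraph.compl_adj]
          refine ⟨fun h => hw'.1 h.symm, fun hadj' => ?_⟩
          exact hvu (huniq v ⟨(hmem v).mpr (Or.inl rfl), hadj'⟩)

lemma parts_singleton (π : Finpartition (univ : Finset V))
    (h : π.parts.card = Fintype.card V) : ∀ A ∈ π.parts, ∃ w, A = {w} := by
  have h1 : ∀ A ∈ π.parts, (1:ℕ) ≤ A.card := fun A hA =>
    Finset.card_pos.mpr (π.nonempty_of_mem_parts hA)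
  have hsum : ∑ A ∈ π.parts, (1:ℕ) = ∑ A ∈ π.parts, A.card := by
    rw [π.sum_card_parts, Finset.sum_const, smul_eq_mul, mul_one, h, Finset.card_univ]
  have key := (Finset.sum_eq_sum_iff_of_le h1).mp hsum
  intro A hA
  exact Finset.card_eq_one.mp (key A hA).symm

lemma gcpart_to_prcpart (G : SimpleGraph V)
    (hfull : ∀ v : V, ∃ u : V, u ≠ v ∧ ¬ G.Adj v u)
    (π : Finpartition (univ : Finset V)) (hcard : π.parts.card = Fintype.card V)
    (h : IsGCPartition G π) : IsPrcPartition G π := by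
  intro A hA
  obtain ⟨v, rfl⟩ := parts_singleton π hcard A hA
  obtain ⟨_, B, hB, hBA, hco⟩ := h _ hA
  obtain ⟨u, rfl⟩ := parts_singleton π hcard B hB
  have hvu : v ≠ u := fun h => hBA (by rw [h])
  obtain ⟨hdis, _, _, hdom⟩ := hco
  refine Or.inr ⟨{u}, hB, hBA, hdis, singleton_not_dom G hfull v,
    singleton_not_dom G hfull u, ?_, ?_, (pair_dom_iff G hvu).mp hdom⟩
  · intro w hw a ha b hb _ _
    rw [Finset.mem_singleton] at ha hb; rw [ha, hb]
  · intro w hw a ha b hb _ _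
    rw [Finset.mem_singleton] at ha hb; rw [ha, hb]

lemma prcpart_to_gcpart (G : SimpleGraph V)
    (hfull : ∀ v : V, ∃ u : V, u ≠ v ∧ ¬ G.Adj v u)
    (π : Finpartition (univ : Finset V)) (hcard : π.parts.card = Fintype.card V)
    (h : IsPrcPartition G π) : IsGCPartition G π := by
  intro A hA
  obtain ⟨v, rfl⟩ := parts_singleton π hcard A hA
  rcases h _ hA with ⟨w, hw, hdom⟩ | ⟨B, hB, hBA, hco⟩
  · exact absurd hdom (singleton_not_dom G hfull v)
  · obtain ⟨u, rfl⟩ := parts_singleton π hcard B hB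
    have hvu : v ≠ u := fun h => hBA (by rw [h])
    obtain ⟨hdis, _, _, _, _, hperf⟩ := hco
    exact ⟨fun hg => singleton_not_dom G hfull v hg.1, {u}, hB, hBA, hdis,
      fun hg => singleton_not_dom G hfull v hg.1,
      fun hg => singleton_not_dom G hfull u hg.1, (pair_dom_iff G hvu).mpr hperf⟩

lemma sSup_eq_card_iff (S : Set ℕ) (hb : ∀ m ∈ S, m ≤ Fintype.card V)
    (hpos : 0 < Fintype.card V) : sSup S = Fintype.card V ↔ Fintype.card V ∈ S := by
  constructor
  · intro h
    have hne : S.Nonempty := by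
      by_contra he
      rw [Set.not_nonempty_iff_eq_empty] at he
      rw [he] at h; rw [csSup_empty] at h; simp only [Nat.bot_eq_zero] at h
      omega
    have hm := Nat.sSup_mem hne ⟨_, hb⟩
    rwa [h] at hm
  · intro h
    exact le_antisymm (csSup_le ⟨_, h⟩ hb) (le_csSup ⟨_, hb⟩ h)

theorem gc_eq_card_iff_prc_eq_card (G : SimpleGraph V)
    (hfull : ∀ v : V, ∃ u : V, u ≠ v ∧ ¬ G.Adj v u) :
    globalCoalitionNumber G = Fintype.card V ↔
      perfectCoalitionNumber G = Fintype.card V := by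
  by_cases hpos : 0 < Fintype.card V
  · have hbgc : ∀ m ∈ {n | ∃ π : Finpartition (Finset.univ : Finset V),
        IsGCPartition G π ∧ π.parts.card = n}, m ≤ Fintype.card V := by
      rintro m ⟨π, _, rfl⟩
      calc π.parts.card ≤ (univ : Finset V).card := π.card_parts_le_card
        _ = Fintype.card V := Finset.card_univ
    have hbprc : ∀ m ∈ {n | ∃ π : Finpartition (Finset.univ : Finset V),
        IsPrcPartition G π ∧ π.parts.card = n}, m ≤ Fintype.card V := by
      rintro m ⟨π, _, rfl⟩
      calc π.parts.card ≤ (univ : Finset V).card := π.card_parts_le_card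
        _ = Fintype.card V := Finset.card_univ
    rw [globalCoalitionNumber, perfectCoalitionNumber,
      sSup_eq_card_iff _ hbgc hpos, sSup_eq_card_iff _ hbprc hpos]
    constructor
    · rintro ⟨π, hπ, hcard⟩
      exact ⟨π, gcpart_to_prcpart G hfull π hcard hπ, hcard⟩
    · rintro ⟨π, hπ, hcard⟩
      exact ⟨π, prcpart_to_gcpart G hfull π hcard hπ, hcard⟩
  · have h0 : Fintype.card V = 0 := by omega
    have hz : ∀ (S : Set ℕ), (∀ m ∈ S, m = 0) → sSup S = 0 := by
      intro S hS
      rcases Set.eq_empty_or_nonempty S with rfl | hne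
      · exact csSup_empty
      · exact Nat.le_zero.mp (csSup_le hne fun m hm => (hS m hm).le)
    have hgc : globalCoalitionNumber G = 0 := by
      apply hz
      rintro m ⟨π, _, rfl⟩
      have := π.card_parts_le_card
      rw [Finset.card_univ, h0] at this
      omega
    have hprc : perfectCoalitionNumber G = 0 := by
      apply hz
      rintro m ⟨π, _, rfl⟩
      have := π.card_parts_le_card
      rw [Finset.card_univ, h0] at this
      omega
    rw [h0, hgc, hprc]
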